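/- Let X be a real-valued random variable with mean m and variance σ², and let c be a real number. Setting p₀ := P(X > c), one has E[(X - c)^+] ≤ (m - c)·p₀ + σ·√(p₀ - p₀²). -/

import Mathlib

open MeasureTheory

/-- Cauchy–Schwarz for integrals. -/
lemma integral_mul_le_sqrt_mul_sqrt {Ω : Type*} [MeasurableSpace Ω] (μ : Measure Ω)
    (f g : Ω → ℝ) (hf : MemLp f 2 μ) (hg : MemLp g 2 μ) :
    ∫ ω, f ω * g ω ∂μ ≤
      Real.sqrt (∫ ω, f ω ^ 2 ∂μ) * Real.sqrt (∫ ω, g ω ^ 2 ∂μ) := by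
  have hpq : (2 : ℝ).HolderConjugate 2 := ⟨by norm_num, by norm_num, by norm_num⟩
  have h2 : ENNReal.ofReal (2 : ℝ) = 2 := by norm_num
  have habs : ∫ ω, f ω * g ω ∂μ ≤ ∫ ω, |f ω| * |g ω| ∂μ := by
    calc ∫ ω, f ω * g ω ∂μ ≤ |∫ ω, f ω * g ω ∂μ| := le_abs_self _
      _ ≤ ∫ ω, |f ω| * |g ω| ∂μ := by
          simpa [Real.norm_eq_abs, abs_mul] using
            norm_integral_le_integral_norm (μ := μ) (fun ω => f ω * g ω)
  refine habs.trans ?_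
  have h := integral_mul_le_Lp_mul_Lq_of_nonneg hpq
    (f := fun ω => |f ω|) (g := fun ω => |g ω|)
    (Filter.Eventually.of_forall fun ω => abs_nonneg _)
    (Filter.Eventually.of_forall fun ω => abs_nonneg _)
    (by rw [h2]; exact hf.abs) (by rw [h2]; exact hg.abs)
  have hf2 : ∫ ω, |f ω| ^ (2 : ℝ) ∂μ = ∫ ω, f ω ^ 2 ∂μ := by
    apply integral_congr_ae
    refine Filter.Eventually.of_forall fun ω => ?_
    show |f ω| ^ (2:ℝ) = f ω ^ 2
    rw [show ((2:ℝ)) = ((2:ℕ):ℝ) by norm_num, Real.rpow_natCast, sq_abs]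
  have hg2 : ∫ ω, |g ω| ^ (2 : ℝ) ∂μ = ∫ ω, g ω ^ 2 ∂μ := by
    apply integral_congr_ae
    refine Filter.Eventually.of_forall fun ω => ?_
    show |g ω| ^ (2:ℝ) = g ω ^ 2
    rw [show ((2:ℝ)) = ((2:ℕ):ℝ) by norm_num, Real.rpow_natCast, sq_abs]
  rw [hf2, hg2] at h
  refine h.trans ?_
  rw [Real.sqrt_eq_rpow, Real.sqrt_eq_rpow]

theorem expectation_pos_part_upper_bound
    {Ω : Type*} [MeasurableSpace Ω] (μ : Measure Ω) [IsProbabilityMeasure μ]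
    (X : Ω → ℝ) (m c σ : ℝ) (hσ : 0 ≤ σ)
    (hX2 : MemLp X 2 μ)
    (hmean : ∫ ω, X ω ∂μ = m)
    (hvar : ∫ ω, (X ω - m) ^ 2 ∂μ = σ ^ 2) :
    ∫ ω, max (X ω - c) 0 ∂μ ≤
      (m - c) * (μ {ω | c < X ω}).toReal
        + σ * Real.sqrt ((μ {ω | c < X ω}).toReal - (μ {ω | c < X ω}).toReal ^ 2) := by
  -- replace X by a strongly measurable representative Y
  obtain ⟨Y, hYsm, hXY⟩ := hX2.aestronglyMeasurable
  have hY2 : MemLp Y 2 μ := hX2.ae_eq hXY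
  have hYmeas : Measurable Y := hYsm.measurable
  have hsets : {ω | c < X ω} =ᵐ[μ] {ω | c < Y ω} := by
    filter_upwards [hXY] with ω h
    show (c < X ω) = (c < Y ω)
    rw [h]
  have hμeq : μ {ω | c < X ω} = μ {ω | c < Y ω} := measure_congr hsets
  have hmaxeq : ∫ ω, max (X ω - c) 0 ∂μ = ∫ ω, max (Y ω - c) 0 ∂μ := by
    apply integral_congr_ae
    filter_upwards [hXY] with ω h
    rw [h]
  have hmeanY : ∫ ω, Y ω ∂μ = m := by
    rw [← hmean]; apply integral_congr_ae; filter_upwards [hXY] with ω h; rw [h]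
  have hvarY : ∫ ω, (Y ω - m) ^ 2 ∂μ = σ ^ 2 := by
    rw [← hvar]; apply integral_congr_ae; filter_upwards [hXY] with ω h; rw [h]
  rw [hmaxeq, hμeq]
  clear hmaxeq hμeq hsets hXY hmean hvar hX2 X
  -- now work with the measurable Y
  set A : Set Ω := {ω | c < Y ω} with hA
  have hAmeas : MeasurableSet A := measurableSet_lt measurable_const hYmeas
  set p : ℝ := (μ A).toReal with hp
  have hμA : μ A ≠ ⊤ := (measure_lt_top μ A).ne
  -- indicator function
  set χ : Ω → ℝ := A.indicator (fun _ => 1) with hχ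
  have hχmem : MemLp χ 2 μ := (memLp_const (1 : ℝ)).indicator hAmeas
  have hχint : Integrable χ μ := hχmem.integrable (by norm_num)
  have hχ_int : ∫ ω, χ ω ∂μ = p := by
    rw [hχ, integral_indicator_const _ hAmeas]; simp [hp, measureReal_def]
  -- f = Y - m, g = χ - p
  set f : Ω → ℝ := fun ω => Y ω - m with hf
  set g : Ω → ℝ := fun ω => χ ω - p with hg
  have hfmem : MemLp f 2 μ := hY2.sub (memLp_const m)
  have hgmem : MemLp g 2 μ := hχmem.sub (memLp_const p)
  have hfint : Integrable f μ := hfmem.integrable (by norm_num)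
  have hYint : Integrable Y μ := hY2.integrable (by norm_num)
  have hfgint : Integrable (fun ω => f ω * g ω) μ := by
    have : MemLp (fun ω => f ω * g ω) 1 μ := by
      have := hgmem.smul hfmem (p := 2) (q := 2) (r := 1)
      simpa [smul_eq_mul, mul_comm, Pi.mul_def] using this
    exact memLp_one_iff_integrable.mp this
  -- ∫ f = 0
  have hf_int : ∫ ω, f ω ∂μ = 0 := by
    rw [hf]
    rw [integral_sub hYint (integrable_const m), hmeanY, integral_const]
    simp
  -- ∫ χ² = p  (since χ² = χ)
  have hχsq : ∀ ω, χ ω ^ 2 = χ ω := by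
    intro ω
    rw [hχ]
    by_cases h : ω ∈ A <;> simp [Set.indicator_of_mem, Set.indicator_of_notMem, h]
  -- ∫ g² = p - p²
  have hg_sq_int : ∫ ω, g ω ^ 2 ∂μ = p - p ^ 2 := by
    have heq : ∀ ω, g ω ^ 2 = χ ω - 2 * p * χ ω + p ^ 2 := by
      intro ω
      have : g ω ^ 2 = χ ω ^ 2 - 2 * p * χ ω + p ^ 2 := by rw [hg]; ring
      rw [this, hχsq ω]
    calc ∫ ω, g ω ^ 2 ∂μ = ∫ ω, (χ ω - 2 * p * χ ω + p ^ 2) ∂μ := by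
          apply integral_congr_ae; exact Filter.Eventually.of_forall heq
      _ = (∫ ω, (χ ω - 2 * p * χ ω) ∂μ) + ∫ _, p ^ 2 ∂μ := by
          exact integral_add (hχint.sub (hχint.const_mul _)) (integrable_const _)
      _ = ((∫ ω, χ ω ∂μ) - ∫ ω, 2 * p * χ ω ∂μ) + p ^ 2 := by
          rw [integral_sub hχint (hχint.const_mul _), integral_const]; simp
      _ = (p - 2 * p * p) + p ^ 2 := by rw [integral_const_mul, hχ_int]
      _ = p - p ^ 2 := by ring
  -- Cauchy–Schwarz
  have hCS : ∫ ω, f ω * g ω ∂μ ≤ σ * Real.sqrt (p - p ^ 2) := by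
    have h := integral_mul_le_sqrt_mul_sqrt μ f g hfmem hgmem
    rw [hvarY, hg_sq_int] at h
    rwa [Real.sqrt_sq hσ] at h
  -- pointwise decomposition: max (Y - c) 0 = f*g + (m - c)*χ + p*f
  have hdecomp : ∀ ω, max (Y ω - c) 0 = f ω * g ω + (m - c) * χ ω + p * f ω := by
    intro ω
    by_cases h : ω ∈ A
    · have hχω : χ ω = 1 := by rw [hχ]; simp [Set.indicator_of_mem h]
      have hYc : c < Y ω := h
      rw [max_eq_left (by linarith)]
      simp only [hf, hg, hχω]
      ring
    · have hχω : χ ω = 0 := by rw [hχ]; simp [Set.indicator_of_notMem h]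
      have hYc : ¬ c < Y ω := h
      push_neg at hYc
      rw [max_eq_right (by linarith)]
      simp only [hf, hg, hχω]
      ring
  have hint_eq : ∫ ω, max (Y ω - c) 0 ∂μ = (∫ ω, f ω * g ω ∂μ) + (m - c) * p := by
    calc ∫ ω, max (Y ω - c) 0 ∂μ
        = ∫ ω, (f ω * g ω + (m - c) * χ ω + p * f ω) ∂μ := by
          apply integral_congr_ae; exact Filter.Eventually.of_forall hdecomp
      _ = (∫ ω, (f ω * g ω + (m - c) * χ ω) ∂μ) + ∫ ω, p * f ω ∂μ := by
          exact integral_add (hfgint.add (hχint.const_mul _)) (hfint.const_mul _)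
      _ = (∫ ω, f ω * g ω ∂μ) + (∫ ω, (m - c) * χ ω ∂μ) + ∫ ω, p * f ω ∂μ := by
          rw [integral_add hfgint (hχint.const_mul _)]
      _ = (∫ ω, f ω * g ω ∂μ) + (m - c) * p := by
          rw [integral_const_mul, integral_const_mul, hχ_int, hf_int]; ring
  rw [hint_eq]
  linarith [hCS]
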